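/- Let 𝒢 be the simplicial clique sum (SCS) of G_1 and G_2. Then a set M ⊆ V(𝒢) is a maximal independent set of 𝒢 if and only if M = M_1 ∪ M_2, where M_1 is a maximal independent set of G_1, M_2 is a maximal independent set of G_2, and M_1 ∩ M_2 = {v} for some vertex v ∈ V(G_1) ∩ V(G_2). -/

import Mathlib

open Finset

open scoped Classical

/-- The closed neighborhood `N[v]` of a vertex `v`: `v` together with its neighbors. -/
noncomputable def clNbhd {V : Type*} [Fintype V] (G : SimpleGraph V) (v : V) : Finset V :=
  univ.filter (fun u => u = v ∨ G.Adj v u)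

/-- The closed neighborhood `N[s]` of a finite set `s` of vertices. -/
noncomputable def clNbhdSet {V : Type*} [Fintype V] (G : SimpleGraph V) (s : Finset V) : Finset V :=
  s.biUnion (clNbhd G)

/-- A maximal clique of a graph: a clique not properly contained in any other clique. -/
def IsMaxClique {V : Type*} (G : SimpleGraph V) (C : Finset V) : Prop :=
  G.IsClique (C : Set V) ∧ ∀ D : Finset V, G.IsClique (D : Set V) → C ⊆ D → D = C

/-- A vertex is simplicial if its closed neighborhood is a maximal clique. -/
def IsSimplicialVertex {V : Type*} [Fintype V] (G : SimpleGraph V) (v : V) : Prop :=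
  IsMaxClique G (clNbhd G v)

/-- A simplicial clique: a maximal clique containing at least one simplicial vertex. -/
def IsSimplicialClique {V : Type*} [Fintype V] (G : SimpleGraph V) (C : Finset V) : Prop :=
  IsMaxClique G C ∧ ∃ v ∈ C, IsSimplicialVertex G v

/-- The set `C(G)` of simplicial cliques of `G`. -/
noncomputable def simpCliques {V : Type*} [Fintype V] (G : SimpleGraph V) : Finset (Finset V) :=
  univ.filter (fun C => IsSimplicialClique G C)

/-- The simplicial clique number `sc(G) = |C(G)|`. -/
noncomputable def scNum {V : Type*} [Fintype V] (G : SimpleGraph V) : ℕ :=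
  (simpCliques G).card

/-- A simplicial clique covered graph (SCCG): `C(G)` is nonempty and the union of the
simplicial cliques is the whole vertex set. -/
def IsSCCG {V : Type*} [Fintype V] (G : SimpleGraph V) : Prop :=
  (simpCliques G).Nonempty ∧ ∀ v : V, ∃ C ∈ simpCliques G, v ∈ C

/-- The connection set `W` of `G`: vertices belonging to at least two simplicial cliques. -/
noncomputable def connSet {V : Type*} [Fintype V] (G : SimpleGraph V) : Finset V :=
  univ.filter (fun v => 1 < ((simpCliques G).filter (fun C => v ∈ C)).card)

/-- `S(I)`: the set of simplicial cliques not contained in the closed neighborhood `N[I]`. -/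
noncomputable def sFam {V : Type*} [Fintype V] (G : SimpleGraph V) (I : Finset V) :
    Finset (Finset V) :=
  (simpCliques G).filter (fun C => ¬ C ⊆ clNbhdSet G I)

/-- An independent set of vertices: no two of its vertices are adjacent. -/
def IsIndep {V : Type*} (G : SimpleGraph V) (s : Finset V) : Prop :=
  ∀ u ∈ s, ∀ w ∈ s, ¬ G.Adj u w

/-- A maximal independent set: an independent set not properly contained in any
other independent set. -/
def IsMaxIndep {V : Type*} (G : SimpleGraph V) (s : Finset V) : Prop :=
  IsIndep G s ∧ ∀ t : Finset V, IsIndep G t → s ⊆ t → t = s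

/-- A well-covered weighting: a weighting whose sum over every maximal independent set
is the same. -/
def IsWCW {V : Type*} (G : SimpleGraph V) {F : Type*} [Field F] (f : V → F) : Prop :=
  ∀ s t : Finset V, IsMaxIndep G s → IsMaxIndep G t →
    ∑ v ∈ s, f v = ∑ v ∈ t, f v

/-- The well-covered space of `G` over `F`: the `F`-vector space of well-covered
weightings of `G`. -/
noncomputable def wcSpace {V : Type*} (G : SimpleGraph V) (F : Type*) [Field F] :
    Submodule F (V → F) where
  carrier := {f | IsWCW G f}
  zero_mem' := by
    intro s t _ _
    simp
  add_mem' := by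
    intro f g hf hg
    simp only [Set.mem_setOf_eq] at hf hg ⊢
    intro s t hs ht
    simp only [Pi.add_apply, Finset.sum_add_distrib]
    rw [hf s t hs ht, hg s t hs ht]
  smul_mem' := by
    intro c f hf
    simp only [Set.mem_setOf_eq] at hf ⊢
    intro s t hs ht
    simp only [Pi.smul_apply, smul_eq_mul, ← Finset.mul_sum]
    rw [hf s t hs ht]

/-- The well-covered dimension `wcdim(G, F)`. -/
noncomputable def wcdim {V : Type*} (G : SimpleGraph V) (F : Type*) [Field F] : ℕ :=
  Module.finrank F (wcSpace G F)
/-- The finset of vertices of a subgraph `H` that lie in a given set `s` of ambient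
vertices, viewed as vertices of `H`. -/
noncomputable def restrictToSub {V : Type*} [Fintype V] {𝒢 : SimpleGraph V}
    (H : 𝒢.Subgraph) (s : Set V) : Finset ↥H.verts :=
  univ.filter (fun x => (x : V) ∈ s)

/-- `𝒢` is the simplicial clique sum (SCS) of its subgraphs `H₁` and `H₂`:
their simplicial clique sets are nonempty, their vertex sets cover `V(𝒢)`, their edge
sets cover `E(𝒢)`, and `V(H₁) ∩ V(H₂)` is a simplicial clique of `H₁`, of `H₂`, and
of `𝒢`. -/
def IsSCS {V : Type*} [Fintype V] (𝒢 : SimpleGraph V) (H₁ H₂ : 𝒢.Subgraph) : Prop :=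
  (simpCliques H₁.coe).Nonempty ∧ (simpCliques H₂.coe).Nonempty ∧
  H₁.verts ∪ H₂.verts = Set.univ ∧
  H₁.edgeSet ∪ H₂.edgeSet = 𝒢.edgeSet ∧
  IsSimplicialClique H₁.coe (restrictToSub H₁ (H₁.verts ∩ H₂.verts)) ∧
  IsSimplicialClique H₂.coe (restrictToSub H₂ (H₁.verts ∩ H₂.verts)) ∧
  IsSimplicialClique 𝒢 (H₁.verts ∩ H₂.verts).toFinset

/-- A chordal graph: no induced cycles of length at least 4. -/
def IsChordal {V : Type*} (G : SimpleGraph V) : Prop :=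
  ∀ n : ℕ, 4 ≤ n → IsEmpty (SimpleGraph.cycleGraph n ↪g G)

section AuxMIS

variable {V : Type*} [Fintype V]

lemma mem_clNbhd' {G : SimpleGraph V} {v u : V} :
    u ∈ clNbhd G v ↔ u = v ∨ G.Adj v u := by simp [clNbhd]

/-- Maximal independent sets are dominating. -/
lemma maxIndep_dominating {G : SimpleGraph V} {M : Finset V}
    (hM : IsMaxIndep G M) (x : V) : ∃ u ∈ M, u = x ∨ G.Adj x u := by
  by_cases hx : x ∈ M
  · exact ⟨x, hx, Or.inl rfl⟩
  · by_contra h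
    push_neg at h
    have hind : IsIndep G (insert x M) := by
      intro a ha b hb hab
      rcases Finset.mem_insert.mp ha with ha' | ha' <;>
        rcases Finset.mem_insert.mp hb with hb' | hb'
      · rw [ha', hb'] at hab; exact G.loopless.irrefl _ hab
      · rw [ha'] at hab; exact (h b hb').2 hab
      · rw [hb'] at hab; exact (h a ha').2 hab.symm
      · exact hM.1 a ha' b hb' hab
    have := hM.2 _ hind (Finset.subset_insert _ _)
    exact hx (this ▸ Finset.mem_insert_self x M)

/-- Every maximal independent set meets every simplicial clique. -/
lemma maxIndep_meets_simpClique {G : SimpleGraph V} {C : Finset V}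
    (hC : IsSimplicialClique G C) {M : Finset V} (hM : IsMaxIndep G M) :
    ∃ v, v ∈ M ∧ v ∈ C := by
  obtain ⟨hmax, w, hwC, hw⟩ := hC
  have hsub : C ⊆ clNbhd G w := by
    intro u hu
    refine mem_clNbhd'.mpr ?_
    by_cases h : u = w
    · exact Or.inl h
    · exact Or.inr (hmax.1 (Finset.mem_coe.mpr hwC) (Finset.mem_coe.mpr hu)
        (fun he => h he.symm))
  have heq : clNbhd G w = C := hmax.2 _ hw.1 hsub
  obtain ⟨u, huM, hu⟩ := maxIndep_dominating hM w
  exact ⟨u, huM, heq ▸ mem_clNbhd'.mpr hu⟩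

/-- Key auxiliary step: the restriction of a maximal independent set of a simplicial
clique sum to one of the parts is a maximal independent set of that part. -/
lemma aux_restrict_maxIndep {𝒢 : SimpleGraph V} {H K : 𝒢.Subgraph} {M : Finset V}
    (hM : IsMaxIndep 𝒢 M)
    (hedges : H.edgeSet ∪ K.edgeSet = 𝒢.edgeSet)
    (hcl : H.coe.IsClique ((univ.filter (fun x : ↥H.verts => (x : V) ∈ K.verts)) :
      Set ↥H.verts))
    {v₀ : V} (hv₀M : v₀ ∈ M) (hv₀H : v₀ ∈ H.verts) (hv₀K : v₀ ∈ K.verts) :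
    IsMaxIndep H.coe (univ.filter (fun x : ↥H.verts => (x : V) ∈ M)) := by
  constructor
  · intro a ha b hb hab
    simp only [Finset.mem_filter] at ha hb
    exact hM.1 _ ha.2 _ hb.2 (H.adj_sub hab)
  · intro t ht hsub
    refine le_antisymm (fun x hx => ?_) hsub
    simp only [Finset.mem_filter, Finset.mem_univ, true_and]
    by_contra hxM
    have hkey : ∀ u ∈ M, ¬ 𝒢.Adj (↑x) u := by
      intro u huM hadj
      have hmem : s(↑x, u) ∈ H.edgeSet ∪ K.edgeSet := by
        rw [hedges]; exact hadj
      rcases hmem with he | he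
      · have hH : H.Adj ↑x u := SimpleGraph.Subgraph.mem_edgeSet.mp he
        have hu : u ∈ H.verts := hH.snd_mem
        have hut : (⟨u, hu⟩ : ↥H.verts) ∈ t := by
          refine hsub ?_
          simp [huM]
        exact ht x hx _ hut hH
      · have hK : K.Adj ↑x u := SimpleGraph.Subgraph.mem_edgeSet.mp he
        have hxK : (↑x : V) ∈ K.verts := hK.fst_mem
        by_cases hxv : (↑x : V) = v₀
        · exact hxM (hxv ▸ hv₀M)
        · have hv₀t : (⟨v₀, hv₀H⟩ : ↥H.verts) ∈ t := by
            refine hsub ?_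
            simp [hv₀M]
          have hadj' : H.coe.Adj x ⟨v₀, hv₀H⟩ := by
            refine hcl ?_ ?_ ?_
            · simp [hxK]
            · simp [hv₀K]
            · intro h
              exact hxv (congrArg Subtype.val h)
          exact ht x hx _ hv₀t hadj'
    have hind : IsIndep 𝒢 (insert (↑x) M) := by
      intro a ha b hb hab
      rcases Finset.mem_insert.mp ha with ha' | ha' <;>
        rcases Finset.mem_insert.mp hb with hb' | hb'
      · rw [ha', hb'] at hab; exact 𝒢.loopless.irrefl _ hab
      · rw [ha'] at hab; exact hkey b hb' hab
      · rw [hb'] at hab; exact hkey a ha' hab.symm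
      · exact hM.1 a ha' b hb' hab
    have := hM.2 _ hind (Finset.subset_insert _ _)
    exact hxM (this ▸ Finset.mem_insert_self (↑x) M)

end AuxMIS

/-- A set `M` is a maximal independent set of a simplicial clique sum
`𝒢` of `G₁` and `G₂` if and only if `M = M₁ ∪ M₂` with `M₁` a maximal independent set
of `G₁`, `M₂` a maximal independent set of `G₂`, and `M₁ ∩ M₂ = {v}` for some vertex
`v ∈ V(G₁) ∩ V(G₂)`. -/
theorem scs_mis_iff {V : Type*} [Fintype V] (𝒢 : SimpleGraph V)
    (hconn : 𝒢.Connected) (H₁ H₂ : 𝒢.Subgraph) (hscs : IsSCS 𝒢 H₁ H₂) (M : Finset V) :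
    IsMaxIndep 𝒢 M ↔
      ∃ (M₁ : Finset ↥H₁.verts) (M₂ : Finset ↥H₂.verts),
        IsMaxIndep H₁.coe M₁ ∧ IsMaxIndep H₂.coe M₂ ∧
        M = M₁.image Subtype.val ∪ M₂.image Subtype.val ∧
        ∃ v : V, v ∈ H₁.verts ∩ H₂.verts ∧
          M₁.image Subtype.val ∩ M₂.image Subtype.val = {v} := by
  obtain ⟨hne1, hne2, hcover, hedges, hC1, hC2, hCG⟩ := hscs
  -- the clique of `H₁.coe` rephrased with a filter
  have hcl1 : H₁.coe.IsClique ((univ.filter (fun x : ↥H₁.verts => (x : V) ∈ H₂.verts)) :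
      Set ↥H₁.verts) := by
    have : restrictToSub H₁ (H₁.verts ∩ H₂.verts) =
        univ.filter (fun x : ↥H₁.verts => (x : V) ∈ H₂.verts) := by
      ext x
      simp [restrictToSub, x.2]
    exact this ▸ hC1.1.1
  have hcl2 : H₂.coe.IsClique ((univ.filter (fun x : ↥H₂.verts => (x : V) ∈ H₁.verts)) :
      Set ↥H₂.verts) := by
    have : restrictToSub H₂ (H₁.verts ∩ H₂.verts) =
        univ.filter (fun x : ↥H₂.verts => (x : V) ∈ H₁.verts) := by
      ext x
      simp [restrictToSub, x.2, and_comm]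
    exact this ▸ hC2.1.1
  have hedges' : H₂.edgeSet ∪ H₁.edgeSet = 𝒢.edgeSet := by
    rw [Set.union_comm]; exact hedges
  constructor
  · -- forward direction
    intro hM
    obtain ⟨v₀, hv₀M, hv₀C⟩ := maxIndep_meets_simpClique hCG hM
    rw [Set.mem_toFinset] at hv₀C
    have huniq : ∀ u ∈ M, u ∈ H₁.verts → u ∈ H₂.verts → u = v₀ := by
      intro u huM hu1 hu2
      by_contra hne
      refine hM.1 u huM v₀ hv₀M (hCG.1.1 ?_ ?_ hne)
      · exact Finset.mem_coe.mpr (Set.mem_toFinset.mpr ⟨hu1, hu2⟩)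
      · exact Finset.mem_coe.mpr (Set.mem_toFinset.mpr hv₀C)
    refine ⟨univ.filter (fun x : ↥H₁.verts => (x : V) ∈ M),
            univ.filter (fun x : ↥H₂.verts => (x : V) ∈ M),
            aux_restrict_maxIndep hM hedges hcl1 hv₀M hv₀C.1 hv₀C.2,
            aux_restrict_maxIndep hM hedges' hcl2 hv₀M hv₀C.2 hv₀C.1,
            ?_, v₀, hv₀C, ?_⟩
    · ext u
      simp only [Finset.mem_union, Finset.mem_image, Finset.mem_filter, Finset.mem_univ,
        true_and]
      constructor
      · intro huM
        have : u ∈ H₁.verts ∪ H₂.verts := by rw [hcover]; trivial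
        rcases this with h | h
        · exact Or.inl ⟨⟨u, h⟩, huM, rfl⟩
        · exact Or.inr ⟨⟨u, h⟩, huM, rfl⟩
      · rintro (⟨a, haM, rfl⟩ | ⟨a, haM, rfl⟩) <;> exact haM
    · ext u
      simp only [Finset.mem_inter, Finset.mem_image, Finset.mem_filter, Finset.mem_univ,
        true_and, Finset.mem_singleton]
      constructor
      · rintro ⟨⟨a, haM, rfl⟩, ⟨b, hbM, hba⟩⟩
        exact huniq _ haM a.2 (hba ▸ b.2)
      · intro hu
        rw [hu]
        exact ⟨⟨⟨v₀, hv₀C.1⟩, hv₀M, rfl⟩, ⟨⟨v₀, hv₀C.2⟩, hv₀M, rfl⟩⟩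
  · -- backward direction
    rintro ⟨M₁, M₂, hM₁, hM₂, hMeq, v, hvC, hinter⟩
    have hv12 : v ∈ M₁.image Subtype.val ∧ v ∈ M₂.image Subtype.val := by
      have : v ∈ M₁.image Subtype.val ∩ M₂.image Subtype.val := by
        rw [hinter]; exact Finset.mem_singleton_self v
      exact Finset.mem_inter.mp this
    obtain ⟨a₀, ha₀M, ha₀v⟩ := Finset.mem_image.mp hv12.1
    obtain ⟨b₀, hb₀M, hb₀v⟩ := Finset.mem_image.mp hv12.2
    -- any vertex of M₁ lying in H₂.verts equals v, and symmetrically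
    have key1 : ∀ a ∈ M₁, (a : V) ∈ H₂.verts → (a : V) = v := by
      intro a haM ha2
      by_cases h : a = a₀
      · rw [h, ha₀v]
      · exfalso
        refine hM₁.1 a haM a₀ ha₀M (hcl1 ?_ ?_ h)
        · simp [ha2]
        · simp [ha₀v ▸ hvC.2]
    have key2 : ∀ b ∈ M₂, (b : V) ∈ H₁.verts → (b : V) = v := by
      intro b hbM hb1
      by_cases h : b = b₀
      · rw [h, hb₀v]
      · exfalso
        refine hM₂.1 b hbM b₀ hb₀M (hcl2 ?_ ?_ h)
        · simp [hb1]
        · simp [hb₀v ▸ hvC.1]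
    have him1 : M₁.image Subtype.val ⊆ M := by
      rw [hMeq]; exact Finset.subset_union_left
    have him2 : M₂.image Subtype.val ⊆ M := by
      rw [hMeq]; exact Finset.subset_union_right
    -- membership in M with a vertex of H₁.verts forces membership in image M₁
    have hmem1 : ∀ u ∈ M, u ∈ H₁.verts → u ∈ M₁.image Subtype.val := by
      intro u huM hu1
      rw [hMeq] at huM
      rcases Finset.mem_union.mp huM with h | h
      · exact h
      · obtain ⟨b, hbM, rfl⟩ := Finset.mem_image.mp h
        rw [key2 b hbM hu1]
        exact hv12.1
    have hmem2 : ∀ u ∈ M, u ∈ H₂.verts → u ∈ M₂.image Subtype.val := by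
      intro u huM hu2
      rw [hMeq] at huM
      rcases Finset.mem_union.mp huM with h | h
      · obtain ⟨a, haM, rfl⟩ := Finset.mem_image.mp h
        rw [key1 a haM hu2]
        exact hv12.2
      · exact h
    constructor
    · -- independence of M
      intro u huM w hwM hadj
      have hmem : s(u, w) ∈ H₁.edgeSet ∪ H₂.edgeSet := by
        rw [hedges]; exact hadj
      rcases hmem with he | he
      · have h1 : H₁.Adj u w := SimpleGraph.Subgraph.mem_edgeSet.mp he
        obtain ⟨a, haM, ha⟩ := Finset.mem_image.mp (hmem1 u huM h1.fst_mem)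
        obtain ⟨b, hbM, hb⟩ := Finset.mem_image.mp (hmem1 w hwM h1.snd_mem)
        refine hM₁.1 a haM b hbM ?_
        show H₁.Adj (a : V) (b : V)
        rw [ha, hb]; exact h1
      · have h2 : H₂.Adj u w := SimpleGraph.Subgraph.mem_edgeSet.mp he
        obtain ⟨a, haM, ha⟩ := Finset.mem_image.mp (hmem2 u huM h2.fst_mem)
        obtain ⟨b, hbM, hb⟩ := Finset.mem_image.mp (hmem2 w hwM h2.snd_mem)
        refine hM₂.1 a haM b hbM ?_
        show H₂.Adj (a : V) (b : V)
        rw [ha, hb]; exact h2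
    · -- maximality of M
      intro t ht hsub
      refine le_antisymm (fun x hx => ?_) hsub
      by_contra hxM
      have hx12 : x ∈ H₁.verts ∪ H₂.verts := by rw [hcover]; trivial
      rcases hx12 with hx1 | hx2
      · have hind : IsIndep H₁.coe (insert ⟨x, hx1⟩ M₁) := by
          intro a ha b hb hab
          have hat : (a : V) ∈ t := by
            rcases Finset.mem_insert.mp ha with rfl | ha
            · exact hx
            · exact hsub (him1 (Finset.mem_image_of_mem _ ha))
          have hbt : (b : V) ∈ t := by
            rcases Finset.mem_insert.mp hb with rfl | hb
            · exact hx
            · exact hsub (him1 (Finset.mem_image_of_mem _ hb))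
          exact ht _ hat _ hbt (H₁.adj_sub hab)
        have := hM₁.2 _ hind (Finset.subset_insert _ _)
        have hxin : (⟨x, hx1⟩ : ↥H₁.verts) ∈ M₁ := this ▸ Finset.mem_insert_self _ _
        exact hxM (him1 (Finset.mem_image_of_mem _ hxin))
      · have hind : IsIndep H₂.coe (insert ⟨x, hx2⟩ M₂) := by
          intro a ha b hb hab
          have hat : (a : V) ∈ t := by
            rcases Finset.mem_insert.mp ha with rfl | ha
            · exact hx
            · exact hsub (him2 (Finset.mem_image_of_mem _ ha))
          have hbt : (b : V) ∈ t := by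
            rcases Finset.mem_insert.mp hb with rfl | hb
            · exact hx
            · exact hsub (him2 (Finset.mem_image_of_mem _ hb))
          exact ht _ hat _ hbt (H₂.adj_sub hab)
        have := hM₂.2 _ hind (Finset.subset_insert _ _)
        have hxin : (⟨x, hx2⟩ : ↥H₂.verts) ∈ M₂ := this ▸ Finset.mem_insert_self _ _
        exact hxM (him2 (Finset.mem_image_of_mem _ hxin))
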